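/- Let {S_n, n ∈ ℕ^k} be a multiindexed demisubmartingale with S_ℓ = 0 when ∏ ℓ_i = 0, and fix a direction s and a < b. Let U_{n_s}(a,b) be the number of complete upcrossings of [a,b] by the sequence j ↦ S_{n;s;j}, 1 ≤ j ≤ n_s. Then E[U_{n_s}(a,b)] ≤ (E[(S_n - a)⁺] - E[(S_{n;s;1} - a)⁺]) / (b - a). -/

import Mathlib

open MeasureTheory ENNReal

namespace DemiAux

def uphase (a b : ℝ) (u : ℕ → ℝ) : ℕ → Prop
  | 0 => u 0 ≤ a
  | k+1 => u (k+1) ≤ a ∨ (uphase a b u k ∧ u (k+1) < b)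

variable {Ω : Type*} {a b : ℝ} {f : ℕ → Ω → ℝ} {N k : ℕ} {ω : Ω}

theorem le_upperCrossingTime_of_lt (hab : a < b) :
    ∀ m, upperCrossingTime a b f N m ω < N → m ≤ upperCrossingTime a b f N m ω
  | 0, _ => Nat.zero_le _
  | m+1, h => by
      have h1 : upperCrossingTime a b f N m ω < upperCrossingTime a b f N (m+1) ω :=
        upperCrossingTime_lt_succ hab h.ne
      have h2 := le_upperCrossingTime_of_lt hab m (lt_trans h1 h)
      omega

theorem exists_max_upper (hab : a < b) (hk : k < N) :
    ∃ m, upperCrossingTime a b f N m ω ≤ k ∧ k < upperCrossingTime a b f N (m+1) ω := by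
  classical
  obtain ⟨n0, hn0⟩ := exists_upperCrossingTime_eq f N ω hab
  have hex : ∃ m, k < upperCrossingTime a b f N m ω := ⟨n0, by rw [hn0]; exact hk⟩
  have hspec := Nat.find_spec hex
  have hne : Nat.find hex ≠ 0 := by
    intro h
    rw [h] at hspec
    simp only [upperCrossingTime_zero, Pi.bot_apply, bot_eq_zero'] at hspec
    omega
  obtain ⟨m, hm⟩ := Nat.exists_eq_succ_of_ne_zero hne
  have hmin := Nat.find_min hex (m := m) (by omega)
  rw [hm] at hspec
  exact ⟨m, not_lt.1 hmin, hspec⟩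

/-- if `f k ω ≤ a` and `k < N` then `k` is in an upcrossing interval -/
theorem exists_crossing_interval_of_le (hab : a < b) (hk : k < N) (hfk : f k ω ≤ a) :
    ∃ m, m < N ∧ lowerCrossingTime a b f N m ω ≤ k ∧
      k < upperCrossingTime a b f N (m+1) ω := by
  obtain ⟨m, hm1, hm2⟩ := exists_max_upper hab hk
  refine ⟨m, ?_, ?_, hm2⟩
  · have := le_upperCrossingTime_of_lt hab m (lt_of_le_of_lt hm1 hk)
    omega
  · exact hittingBtwn_le_of_mem hm1 hk.le hfk

/-- Main characterization: membership in an upcrossing interval is equivalent to the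
state machine `uphase`. -/
theorem crossing_interval_iff_uphase (hab : a < b) :
    ∀ k, k < N → ((∃ m, m < N ∧ lowerCrossingTime a b f N m ω ≤ k ∧
      k < upperCrossingTime a b f N (m+1) ω) ↔ uphase a b (fun j => f j ω) k)
  | 0, hk => by
      constructor
      · rintro ⟨m, _, hL, _⟩
        have hLN : lowerCrossingTime a b f N m ω ≠ N := by omega
        have := stoppedValue_lowerCrossingTime hLN
        simp only [stoppedValue] at this
        have hL0 : lowerCrossingTime a b f N m ω = 0 := by omega
        rw [hL0] at this
        exact this
      · intro h
        obtain ⟨m, hm1, hm2, hm3⟩ := exists_crossing_interval_of_le hab hk h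
        exact ⟨m, hm1, hm2, hm3⟩
  | k+1, hk => by
      have ih := crossing_interval_iff_uphase hab k (by omega)
      constructor
      · rintro ⟨m, hmN, hL, hU⟩
        by_cases hfk : f (k+1) ω ≤ a
        · exact Or.inl hfk
        · push_neg at hfk
          refine Or.inr ⟨?_, ?_⟩
          · refine ih.1 ⟨m, hmN, ?_, by omega⟩
            have hLN : lowerCrossingTime a b f N m ω ≠ N := by
              have := hU.trans_le (upperCrossingTime_le (n := m+1) (ω := ω))
              omega
            have hfL := stoppedValue_lowerCrossingTime hLN
            simp only [stoppedValue] at hfL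
            have : lowerCrossingTime a b f N m ω ≠ k + 1 := by
              intro h
              rw [h] at hfL
              exact absurd hfL (not_le.2 hfk)
            omega
          · by_contra hb
            push_neg at hb
            have : upperCrossingTime a b f N (m+1) ω ≤ k+1 := by
              rw [upperCrossingTime_succ_eq]
              exact hittingBtwn_le_of_mem hL hk.le hb
            omega
      · rintro (h | ⟨h1, h2⟩)
        · exact exists_crossing_interval_of_le hab hk h
        · obtain ⟨m, hmN, hL, hU⟩ := ih.2 h1
          refine ⟨m, hmN, hL.trans (Nat.le_succ k), ?_⟩
          rcases lt_or_ge (k+1) (upperCrossingTime a b f N (m+1) ω) with h | h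
          · exact h
          · exfalso
            have hUeq : upperCrossingTime a b f N (m+1) ω = k+1 := by omega
            have hUN : upperCrossingTime a b f N (m+1) ω ≠ N := by omega
            have := stoppedValue_upperCrossingTime hUN
            simp only [stoppedValue, hUeq] at this
            exact absurd h2 (not_lt.2 this)


theorem upcrossingStrat_eq_one (hab : a < b) (hk : k < N)
    (h : uphase a b (fun j => f j ω) k) : upcrossingStrat a b f N k ω = 1 := by
  obtain ⟨m, hmN, hL, hU⟩ := (crossing_interval_iff_uphase hab k hk).2 h
  rw [upcrossingStrat, Finset.sum_eq_single_of_mem m (Finset.mem_range.2 hmN)]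
  · rw [Set.indicator_of_mem (Set.mem_Ico.2 ⟨hL, hU⟩)]
    rfl
  · intro m' _ hm'
    refine Set.indicator_of_notMem ?_ _
    rw [Set.mem_Ico]
    rintro ⟨hL', hU'⟩
    rcases lt_or_gt_of_ne hm' with hlt | hlt
    · have : upperCrossingTime a b f N (m'+1) ω ≤ lowerCrossingTime a b f N m ω :=
        le_trans (upperCrossingTime_mono hlt) upperCrossingTime_le_lowerCrossingTime
      omega
    · have : upperCrossingTime a b f N (m+1) ω ≤ lowerCrossingTime a b f N m' ω :=
        le_trans (upperCrossingTime_mono hlt) upperCrossingTime_le_lowerCrossingTime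
      omega

theorem upcrossingStrat_eq_zero (hab : a < b) (hk : k < N)
    (h : ¬ uphase a b (fun j => f j ω) k) : upcrossingStrat a b f N k ω = 0 := by
  rw [upcrossingStrat]
  refine Finset.sum_eq_zero fun m hm => ?_
  refine Set.indicator_of_notMem ?_ _
  rw [Set.mem_Ico]
  rintro ⟨hL', hU'⟩
  exact h ((crossing_interval_iff_uphase hab k hk).1
    ⟨m, Finset.mem_range.1 hm, hL', hU'⟩)


theorem uphase_congr' {u v : ℕ → ℝ} : ∀ k, (∀ j, j ≤ k → u j = v j) →
    (uphase a b u k ↔ uphase a b v k)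
  | 0, h => by simp [uphase, h 0 le_rfl]
  | k+1, h => by
      simp only [uphase, h (k+1) le_rfl,
        uphase_congr' k (fun j hj => h j (hj.trans k.le_succ))]

theorem uphase_anti' {u v : ℕ → ℝ} (h : ∀ j, u j ≤ v j) :
    ∀ k, uphase a b v k → uphase a b u k
  | 0, hv => le_trans (h 0) hv
  | k+1, hv => by
      rcases hv with hv | ⟨hv1, hv2⟩
      · exact Or.inl (le_trans (h _) hv)
      · exact Or.inr ⟨uphase_anti' h k hv1, lt_of_le_of_lt (h _) hv2⟩

theorem uphase_measurableSet' [MeasurableSpace Ω] {f : ℕ → Ω → ℝ}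
    (hf : ∀ j, Measurable (f j)) : ∀ k, MeasurableSet {ω | uphase a b (fun j => f j ω) k}
  | 0 => measurableSet_le (hf 0) measurable_const
  | k+1 => by
      have : {ω | uphase a b (fun j => f j ω) (k+1)} =
          {ω | f (k+1) ω ≤ a} ∪
            ({ω | uphase a b (fun j => f j ω) k} ∩ {ω | f (k+1) ω < b}) := rfl
      rw [this]
      exact ((measurableSet_le (hf _) measurable_const).union
        ((uphase_measurableSet' hf k).inter (measurableSet_lt (hf _) measurable_const)))

theorem hitting_congr {u v : ℕ → Ω → ℝ} {s : Set ℝ} {c N : ℕ} {ω : Ω}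
    (h : ∀ j, c ≤ j → j < N → u j ω = v j ω) :
    hittingBtwn u s c N ω = hittingBtwn v s c N ω := by
  rcases le_or_gt c N with hcN | hcN
  · have key : ∀ (u v : ℕ → Ω → ℝ), (∀ j, c ≤ j → j < N → u j ω = v j ω) →
        hittingBtwn u s c N ω ≤ hittingBtwn v s c N ω := by
      intro u v h
      rcases lt_or_ge (hittingBtwn v s c N ω) N with hv | hv
      · have hmem := hittingBtwn_mem_set_of_hittingBtwn_lt hv
        have hc : c ≤ hittingBtwn v s c N ω := le_hittingBtwn hcN ω
        have : u (hittingBtwn v s c N ω) ω ∈ s := by rw [h _ hc hv]; exact hmem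
        exact hittingBtwn_le_of_mem hc (hittingBtwn_le ω) this
      · exact le_trans (hittingBtwn_le ω) hv
    exact le_antisymm (key u v h) (key v u fun j h1 h2 => (h j h1 h2).symm)
  · rw [hittingBtwn_of_lt hcN, hittingBtwn_of_lt hcN]

theorem crossing_congr {u v : ℕ → Ω → ℝ} {N : ℕ} {ω : Ω}
    (h : ∀ j, j < N → u j ω = v j ω) : ∀ m,
    upperCrossingTime a b u N m ω = upperCrossingTime a b v N m ω ∧
      lowerCrossingTime a b u N m ω = lowerCrossingTime a b v N m ω
  | 0 => by
      refine ⟨rfl, ?_⟩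
      simp only [lowerCrossingTime_zero]
      exact hitting_congr (fun j _ hj => h j hj)
  | m+1 => by
      have ih := crossing_congr h m
      have h1 : upperCrossingTime a b u N (m+1) ω = upperCrossingTime a b v N (m+1) ω := by
        rw [upperCrossingTime_succ_eq, upperCrossingTime_succ_eq, ih.2]
        exact hitting_congr (fun j _ hj => h j hj)
      refine ⟨h1, ?_⟩
      rw [lowerCrossingTime, lowerCrossingTime, h1]
      exact hitting_congr (fun j _ hj => h j hj)

theorem upcrossingsBefore_congr {u v : ℕ → Ω → ℝ} {N : ℕ} {ω : Ω}
    (h : ∀ j, j < N → u j ω = v j ω) :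
    upcrossingsBefore a b u N ω = upcrossingsBefore a b v N ω := by
  unfold upcrossingsBefore
  congr 1
  ext m
  rw [Set.mem_setOf_eq, Set.mem_setOf_eq, (crossing_congr h m).1]


set_option maxHeartbeats 1000000 in
theorem main_core {Ω : Type*} [MeasurableSpace Ω] (μ : Measure Ω) [IsProbabilityMeasure μ]
    (a b : ℝ) (hab : a < b) (M : ℕ) (f : ℕ → Ω → ℝ)
    (hfint : ∀ j, Integrable (f j) μ)
    (hdemi : ∀ k, k < M → ∀ F : (ℕ → ℝ) → ℝ, Monotone F → (∀ x, 0 ≤ F x) →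
      (∀ x y : ℕ → ℝ, (∀ j, j ≤ k → x j = y j) → F x = F y) →
      Integrable (fun ω => (f (k+1) ω - f k ω) * F (fun j => f j ω)) μ →
      0 ≤ ∫ ω, (f (k+1) ω - f k ω) * F (fun j => f j ω) ∂μ) :
    ∫⁻ ω, (upcrossingsBefore a b f (M+1) ω : ℝ≥0∞) ∂μ ≤
      ENNReal.ofReal (((∫ ω, max (f M ω - a) 0 ∂μ) -
        ∫ ω, max (f 0 ω - a) 0 ∂μ) / (b - a)) := by
  classical
  have hb' : (0:ℝ) < b - a := sub_pos.2 hab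
  set ft : ℕ → Ω → ℝ := fun j ω => f (min j M) ω with hft_def
  set g : ℕ → Ω → ℝ := fun j ω => max (f j ω - a) 0 with hg_def
  set C : ℕ → Ω → ℝ := fun k ω => upcrossingStrat a b ft (M+1) k ω with hC_def
  have hC0 : ∀ k ω, 0 ≤ C k ω := fun k ω => upcrossingStrat_nonneg
  have hC1 : ∀ k ω, C k ω ≤ 1 := fun k ω => upcrossingStrat_le_one
  have hftf : ∀ j, j ≤ M → ∀ ω, ft j ω = f j ω := by
    intro j hj ω
    show f (min j M) ω = f j ω
    rw [min_eq_left hj]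
  -- Step 1 : pathwise inequality
  have key : ∀ ω, (b - a) * ((upcrossingsBefore a b f (M+1) ω : ℕ) : ℝ) ≤
      ∑ k ∈ Finset.range M, C k ω * (g (k+1) ω - g k ω) := by
    intro ω
    have h0 := mul_upcrossingsBefore_le (a := 0) (b := b - a)
      (f := fun j ω => (ft j ω - a)⁺) (N := M+1) (ω := ω) (posPart_nonneg _) hb'
    have hupeq : upcrossingsBefore 0 (b - a) (fun j ω => (ft j ω - a)⁺) (M+1) ω =
        upcrossingsBefore a b f (M+1) ω := by
      rw [upcrossingsBefore_pos_eq hab]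
      exact upcrossingsBefore_congr (fun j hj => hftf j (by omega) ω)
    have hstrat : ∀ k, upcrossingStrat 0 (b - a) (fun j ω => (ft j ω - a)⁺) (M+1) k ω =
        C k ω := by
      intro k
      show _ = upcrossingStrat a b ft (M+1) k ω
      simp only [upcrossingStrat,
        show ∀ m, upperCrossingTime 0 (b-a) (fun j ω => (ft j ω - a)⁺) (M+1) m =
          upperCrossingTime a b ft (M+1) m from fun m => (crossing_pos_eq hab).1,
        show ∀ m, lowerCrossingTime 0 (b-a) (fun j ω => (ft j ω - a)⁺) (M+1) m =
          lowerCrossingTime a b ft (M+1) m from fun m => (crossing_pos_eq hab).2]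
    rw [hupeq, sub_zero] at h0
    refine le_trans h0 (le_of_eq ?_)
    rw [Finset.sum_range_succ]
    have hlast : (ft (M+1) ω - a)⁺ - (ft M ω - a)⁺ = 0 := by
      have hmm : ft (M+1) ω = ft M ω := by
        show f (min (M+1) M) ω = f (min M M) ω
        norm_num
      rw [hmm, sub_self]
    simp only [Pi.sub_apply]
    rw [hlast, mul_zero, add_zero]
    refine Finset.sum_congr rfl fun k hk => ?_
    rw [Finset.mem_range] at hk
    rw [hstrat k]
    congr 1
    have e1 : (ft (k+1) ω - a)⁺ = g (k+1) ω := by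
      rw [hftf (k+1) (by omega) ω]; rfl
    have e2 : (ft k ω - a)⁺ = g k ω := by
      rw [hftf k (by omega) ω]; rfl
    rw [e1, e2]
  have hgint : ∀ j, Integrable (g j) μ := fun j =>
    ((hfint j).sub (integrable_const a)).pos_part
  set f' : ℕ → Ω → ℝ := fun j => (hfint j).1.mk (f j) with hf'def
  have hf'meas : ∀ j, Measurable (f' j) := fun j => ((hfint j).1.stronglyMeasurable_mk).measurable
  have haeall : ∀ᵐ ω ∂μ, ∀ j, f j ω = f' j ω := ae_all_iff.2 fun j => (hfint j).1.ae_eq_mk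
  have hCmeas : ∀ k, k ≤ M → AEStronglyMeasurable (C k) μ := by
    intro k hk
    have hset : MeasurableSet {ω | uphase a b (fun j => f' (min j M) ω) k} :=
      uphase_measurableSet' (fun j => hf'meas _) k
    have hm1 : Measurable ({ω | uphase a b (fun j => f' (min j M) ω) k}.indicator
        (fun _ => (1:ℝ))) := measurable_const.indicator hset
    refine hm1.aestronglyMeasurable.congr ?_
    filter_upwards [haeall] with ω hω
    have hpath : (fun j => f' (min j M) ω) = fun j => ft j ω :=
      funext fun j => ((hω _).symm)
    by_cases hu : uphase a b (fun j => ft j ω) k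
    · have hCone : C k ω = 1 := upcrossingStrat_eq_one hab (by omega) hu
      rw [hCone, Set.indicator_of_mem (by rw [Set.mem_setOf_eq, hpath]; exact hu)]
    · have hCzero : C k ω = 0 := upcrossingStrat_eq_zero hab (by omega) hu
      rw [hCzero, Set.indicator_of_notMem (by rw [Set.mem_setOf_eq, hpath]; exact hu)]
  have hIndMeas : ∀ k, AEStronglyMeasurable (fun ω => if a < f k ω then (1:ℝ) else 0) μ := by
    intro k
    have hset : MeasurableSet {ω | a < f' k ω} := measurableSet_lt measurable_const (hf'meas k)
    have hm1 : Measurable ({ω | a < f' k ω}.indicator (fun _ => (1:ℝ))) :=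
      measurable_const.indicator hset
    refine hm1.aestronglyMeasurable.congr ?_
    filter_upwards [haeall] with ω hω
    simp only [Set.indicator_apply, Set.mem_setOf_eq, hω k]
  have hCint : ∀ k, k ≤ M → Integrable (fun ω => C k ω * (g (k+1) ω - g k ω)) μ := by
    intro k hk
    refine Integrable.bdd_mul ((hgint (k+1)).sub (hgint k)) (hCmeas k hk) (c := 1) (Filter.Eventually.of_forall fun ω => ?_)
    rw [Real.norm_eq_abs, abs_le]
    exact ⟨by linarith [hC0 k ω], by linarith [hC1 k ω]⟩
  have hC1int : ∀ k, k ≤ M →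
      Integrable (fun ω => (1 - C k ω) * (g (k+1) ω - g k ω)) μ := by
    intro k hk
    refine Integrable.bdd_mul ((hgint (k+1)).sub (hgint k))
      (aestronglyMeasurable_const.sub (hCmeas k hk)) (c := 1) (Filter.Eventually.of_forall fun ω => ?_)
    rw [Real.norm_eq_abs, abs_le]
    exact ⟨by linarith [hC1 k ω], by linarith [hC0 k ω]⟩
  -- Step 2 : positivity
  have hpos : ∀ k, k < M → 0 ≤ ∫ ω, (1 - C k ω) * (g (k+1) ω - g k ω) ∂μ := by
    intro k hk
    set F : (ℕ → ℝ) → ℝ := fun u =>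
      (if uphase a b (fun j => u (min j k)) k then 0 else 1) *
        (if a < u k then 1 else 0) with hF_def
    have hFvals : ∀ ω, F (fun j => f j ω) =
        (1 - C k ω) * (if a < f k ω then (1:ℝ) else 0) := by
      intro ω
      have hiff : uphase a b (fun j => f (min j k) ω) k ↔ uphase a b (fun j => ft j ω) k := by
        refine uphase_congr' k fun j hj => ?_
        rw [min_eq_left hj, hftf j (by omega) ω]
      show (if uphase a b (fun j => f (min j k) ω) k then (0:ℝ) else 1) *
          (if a < f k ω then 1 else 0) = _
      by_cases hu : uphase a b (fun j => ft j ω) k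
      · have hCone : C k ω = 1 := upcrossingStrat_eq_one hab (by omega) hu
        rw [hCone, if_pos (hiff.2 hu)]
        ring
      · have hCzero : C k ω = 0 := upcrossingStrat_eq_zero hab (by omega) hu
        rw [hCzero, if_neg (fun h => hu (hiff.1 h))]
        ring
    have hFmono : Monotone F := by
      intro x y hxy
      show (if uphase a b (fun j => x (min j k)) k then (0:ℝ) else 1) *
          (if a < x k then 1 else 0) ≤
        (if uphase a b (fun j => y (min j k)) k then (0:ℝ) else 1) *
          (if a < y k then 1 else 0)
      have h1 : (if uphase a b (fun j => x (min j k)) k then (0:ℝ) else 1) ≤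
          (if uphase a b (fun j => y (min j k)) k then 0 else 1) := by
        by_cases hx : uphase a b (fun j => x (min j k)) k
        · rw [if_pos hx]
          split_ifs <;> norm_num
        · rw [if_neg hx, if_neg (fun hy => hx (uphase_anti' (fun j => hxy _) k hy))]
      have h2 : (if a < x k then (1:ℝ) else 0) ≤ (if a < y k then 1 else 0) := by
        by_cases hx : a < x k
        · rw [if_pos hx, if_pos (lt_of_lt_of_le hx (hxy k))]
        · rw [if_neg hx]
          split_ifs <;> norm_num
      have hx2 : (0:ℝ) ≤ (if a < x k then (1:ℝ) else 0) := by split_ifs <;> norm_num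
      have hy1 : (0:ℝ) ≤ (if uphase a b (fun j => y (min j k)) k then (0:ℝ) else 1) := by
        split_ifs <;> norm_num
      exact mul_le_mul h1 h2 hx2 hy1
    have hFnonneg : ∀ x, 0 ≤ F x := by
      intro x
      show (0:ℝ) ≤ (if uphase a b (fun j => x (min j k)) k then (0:ℝ) else 1) *
        (if a < x k then 1 else 0)
      refine mul_nonneg ?_ ?_ <;> split_ifs <;> norm_num
    have hFdep : ∀ x y : ℕ → ℝ, (∀ j, j ≤ k → x j = y j) → F x = F y := by
      intro x y h
      have hiff : uphase a b (fun j => x (min j k)) k ↔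
          uphase a b (fun j => y (min j k)) k :=
        uphase_congr' k fun j hj => h _ (min_le_right j k)
      show (if uphase a b (fun j => x (min j k)) k then (0:ℝ) else 1) *
          (if a < x k then 1 else 0) =
        (if uphase a b (fun j => y (min j k)) k then (0:ℝ) else 1) *
          (if a < y k then 1 else 0)
      rw [h k le_rfl]
      by_cases hx : uphase a b (fun j => x (min j k)) k
      · rw [if_pos hx, if_pos (hiff.1 hx)]
      · rw [if_neg hx, if_neg (fun hy => hx (hiff.2 hy))]
    have hinteq : (fun ω => (f (k+1) ω - f k ω) * F (fun j => f j ω)) =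
        fun ω => (1 - C k ω) * (if a < f k ω then (1:ℝ) else 0) * (f (k+1) ω - f k ω) := by
      funext ω
      rw [hFvals ω]; ring
    have hintF : Integrable (fun ω => (f (k+1) ω - f k ω) * F (fun j => f j ω)) μ := by
      rw [hinteq]
      refine Integrable.bdd_mul ((hfint (k+1)).sub (hfint k))
        (((aestronglyMeasurable_const.sub (hCmeas k hk.le)).mul (hIndMeas k))) (c := 1) (Filter.Eventually.of_forall fun ω => ?_)
      have h1 := hC0 k ω
      have h2 := hC1 k ω
      rw [Real.norm_eq_abs, abs_le]
      constructor <;> split_ifs <;> simp <;> linarith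
    have hbase := hdemi k hk F hFmono hFnonneg hFdep hintF
    have hptwise : ∀ ω, (f (k+1) ω - f k ω) * F (fun j => f j ω) ≤
        (1 - C k ω) * (g (k+1) ω - g k ω) := by
      intro ω
      rw [hFvals ω]
      have hc0 : 0 ≤ 1 - C k ω := by linarith [hC1 k ω]
      by_cases hfa : a < f k ω
      · rw [if_pos hfa, mul_one]
        have hgk : g k ω = f k ω - a := max_eq_left (by linarith)
        have hgk1 : f (k+1) ω - a ≤ g (k+1) ω := le_max_left _ _
        have hD : f (k+1) ω - f k ω ≤ g (k+1) ω - g k ω := by rw [hgk]; linarith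
        calc (f (k+1) ω - f k ω) * (1 - C k ω)
            = (1 - C k ω) * (f (k+1) ω - f k ω) := by ring
          _ ≤ (1 - C k ω) * (g (k+1) ω - g k ω) := mul_le_mul_of_nonneg_left hD hc0
      · rw [if_neg hfa, mul_zero, mul_zero]
        have hgk : g k ω = 0 := max_eq_right (by push_neg at hfa; linarith)
        have hgk1 : (0:ℝ) ≤ g (k+1) ω := le_max_right _ _
        exact mul_nonneg hc0 (by rw [hgk]; linarith)
    calc (0:ℝ) ≤ ∫ ω, (f (k+1) ω - f k ω) * F (fun j => f j ω) ∂μ := hbase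
      _ ≤ ∫ ω, (1 - C k ω) * (g (k+1) ω - g k ω) ∂μ :=
        integral_mono hintF (hC1int k hk.le) hptwise
  -- Step 3 : sum bound
  have hsumint : Integrable (fun ω => ∑ k ∈ Finset.range M, C k ω * (g (k+1) ω - g k ω)) μ :=
    integrable_finset_sum _ fun k hk => hCint k (by simp at hk; omega)
  have hsum1int : Integrable
      (fun ω => ∑ k ∈ Finset.range M, (1 - C k ω) * (g (k+1) ω - g k ω)) μ :=
    integrable_finset_sum _ fun k hk => hC1int k (by simp at hk; omega)
  have hDint : Integrable (fun ω => ∑ k ∈ Finset.range M, (g (k+1) ω - g k ω)) μ :=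
    integrable_finset_sum _ fun k _ => (hgint (k+1)).sub (hgint k)
  have htel : ∫ ω, (∑ k ∈ Finset.range M, C k ω * (g (k+1) ω - g k ω)) ∂μ ≤
      (∫ ω, g M ω ∂μ) - ∫ ω, g 0 ω ∂μ := by
    have e1 : (fun ω => ∑ k ∈ Finset.range M, C k ω * (g (k+1) ω - g k ω)) =
        fun ω => (∑ k ∈ Finset.range M, (g (k+1) ω - g k ω)) -
          ∑ k ∈ Finset.range M, (1 - C k ω) * (g (k+1) ω - g k ω) := by
      funext ω
      rw [← Finset.sum_sub_distrib]
      exact Finset.sum_congr rfl fun k _ => by ring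
    rw [e1, integral_sub hDint hsum1int]
    have e2 : ∫ ω, (∑ k ∈ Finset.range M, (g (k+1) ω - g k ω)) ∂μ =
        (∫ ω, g M ω ∂μ) - ∫ ω, g 0 ω ∂μ := by
      rw [show (fun ω => ∑ k ∈ Finset.range M, (g (k+1) ω - g k ω)) =
        fun ω => g M ω - g 0 ω from funext fun ω => Finset.sum_range_sub (fun i => g i ω) M]
      exact integral_sub (hgint M) (hgint 0)
    have e3 : 0 ≤ ∫ ω, (∑ k ∈ Finset.range M, (1 - C k ω) * (g (k+1) ω - g k ω)) ∂μ := by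
      rw [integral_finset_sum _ fun k hk => hC1int k (by simp at hk; omega)]
      exact Finset.sum_nonneg fun k hk => hpos k (by simp at hk; omega)
    linarith
  -- Step 4 : conclude
  set h : Ω → ℝ := fun ω =>
    (∑ k ∈ Finset.range M, C k ω * (g (k+1) ω - g k ω)) / (b - a) with hh_def
  have hUle : ∀ ω, ((upcrossingsBefore a b f (M+1) ω : ℕ) : ℝ) ≤ h ω := by
    intro ω
    rw [hh_def, le_div_iff₀ hb', mul_comm]
    exact key ω
  have hh0 : 0 ≤ᵐ[μ] h := Filter.Eventually.of_forall fun ω =>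
    le_trans (Nat.cast_nonneg _) (hUle ω)
  have hhint : Integrable h μ := hsumint.div_const _
  calc ∫⁻ ω, (upcrossingsBefore a b f (M+1) ω : ℝ≥0∞) ∂μ
      = ∫⁻ ω, ENNReal.ofReal ((upcrossingsBefore a b f (M+1) ω : ℕ) : ℝ) ∂μ := by
        simp_rw [ENNReal.ofReal_natCast]
    _ ≤ ∫⁻ ω, ENNReal.ofReal (h ω) ∂μ :=
        lintegral_mono fun ω => ENNReal.ofReal_le_ofReal (hUle ω)
    _ = ENNReal.ofReal (∫ ω, h ω ∂μ) := (ofReal_integral_eq_lintegral_ofReal hhint hh0).symm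
    _ ≤ ENNReal.ofReal (((∫ ω, max (f M ω - a) 0 ∂μ) -
        ∫ ω, max (f 0 ω - a) 0 ∂μ) / (b - a)) := by
        refine ENNReal.ofReal_le_ofReal ?_
        rw [hh_def, integral_div]
        gcongr

end DemiAux



/-- Multiindexed demisubmartingale. -/
def IsMultiDemisubmartingale {k : ℕ} {Ω : Type*} [MeasurableSpace Ω] (μ : Measure Ω)
    (S : (Fin k → ℕ) → Ω → ℝ) : Prop :=
  (∀ n, Integrable (S n) μ) ∧
  ∀ i j : Fin k → ℕ, i ≤ j →
    ∀ f : ({m : Fin k → ℕ // m ≤ i} → ℝ) → ℝ, Monotone f → (∀ x, 0 ≤ f x) →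
      Integrable (fun ω => (S j ω - S i ω) * f (fun m => S m.1 ω)) μ →
      0 ≤ ∫ ω, (S j ω - S i ω) * f (fun m => S m.1 ω) ∂μ

/-- Directional upcrossing inequality: `U_{n_s}(a,b)` is the number of complete
upcrossings of `[a,b]` by `j ↦ S_{n;s;j}`, `1 ≤ j ≤ n_s` (expressed via Mathlib's
`upcrossingsBefore` applied to the shifted sequence `j ↦ S_{n;s;j+1}`); then
`E[U_{n_s}(a,b)] ≤ (E[(S_n - a)⁺] - E[(S_{n;s;1} - a)⁺]) / (b - a)`. -/
theorem stmt_16 {k : ℕ} {Ω : Type*} [MeasurableSpace Ω] (μ : Measure Ω)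
    [IsProbabilityMeasure μ]
    (S : (Fin k → ℕ) → Ω → ℝ) (hS : IsMultiDemisubmartingale μ S)
    (hbd : ∀ ℓ : Fin k → ℕ, (∃ s, ℓ s = 0) → ∀ ω, S ℓ ω = 0)
    (a b : ℝ) (hab : a < b) (s : Fin k) (n : Fin k → ℕ)
    (U : Ω → ℕ)
    (hU : ∀ ω, U ω = upcrossingsBefore a b
      (fun j ω' => S (Function.update n s (j + 1)) ω') (n s) ω) :
    ∫⁻ ω, (U ω : ℝ≥0∞) ∂μ ≤
      ENNReal.ofReal
        (((∫ ω, max (S n ω - a) 0 ∂μ) -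
            ∫ ω, max (S (Function.update n s 1) ω - a) 0 ∂μ) / (b - a)) := by
  classical
  by_cases hN : n s = 0
  · have hU0 : ∀ ω, U ω = 0 := by
      intro ω
      rw [hU ω, hN, upcrossingsBefore_zero]
    simp only [hU0, Nat.cast_zero, lintegral_zero]
    exact zero_le
  · obtain ⟨M, hM⟩ := Nat.exists_eq_succ_of_ne_zero hN
    set f : ℕ → Ω → ℝ := fun j ω' => S (Function.update n s (j + 1)) ω' with hf_def
    have hfint : ∀ j, Integrable (f j) μ := fun j => hS.1 _
    -- the demi hypothesis for the path process
    have hdemi : ∀ q, q < M → ∀ F : (ℕ → ℝ) → ℝ, Monotone F → (∀ x, 0 ≤ F x) →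
        (∀ x y : ℕ → ℝ, (∀ j, j ≤ q → x j = y j) → F x = F y) →
        Integrable (fun ω => (f (q+1) ω - f q ω) * F (fun j => f j ω)) μ →
        0 ≤ ∫ ω, (f (q+1) ω - f q ω) * F (fun j => f j ω) ∂μ := by
      intro q _ F hFmono hFnn hFdep hFint
      set i : Fin k → ℕ := Function.update n s (q+1) with hi_def
      set jj : Fin k → ℕ := Function.update n s (q+2) with hjj_def
      have hij : i ≤ jj := by
        intro m
        by_cases hms : m = s
        · subst hms
          simp [hi_def, hjj_def]
        · simp [hi_def, hjj_def, Function.update_of_ne hms]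
      have pf : ∀ j' : ℕ, Function.update n s (min j' q + 1) ≤ i := by
        intro j' m
        by_cases hms : m = s
        · subst hms
          simp only [hi_def, Function.update_self]
          omega
        · simp [hi_def, Function.update_of_ne hms]
      set F' : ({m : Fin k → ℕ // m ≤ i} → ℝ) → ℝ :=
        fun x => F (fun j' => x ⟨Function.update n s (min j' q + 1), pf j'⟩) with hF'_def
      have hkey : ∀ ω, F' (fun m => S m.1 ω) = F (fun j => f j ω) := by
        intro ω
        show F (fun j' => S (Function.update n s (min j' q + 1)) ω) = F (fun j => f j ω)
        refine hFdep _ _ fun j hj => ?_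
        show S (Function.update n s (min j q + 1)) ω = S (Function.update n s (j + 1)) ω
        rw [min_eq_left hj]
      have hmatch : (fun ω => (S jj ω - S i ω) * F' (fun m => S m.1 ω)) =
          fun ω => (f (q+1) ω - f q ω) * F (fun j => f j ω) := by
        funext ω
        rw [hkey ω]
      have hF'mono : Monotone F' := fun x y hxy => hFmono (fun j' => hxy _)
      have hF'nn : ∀ x, 0 ≤ F' x := fun x => hFnn _
      have hF'int : Integrable (fun ω => (S jj ω - S i ω) * F' (fun m => S m.1 ω)) μ := by
        rw [hmatch]; exact hFint
      have := hS.2 i jj hij F' hF'mono hF'nn hF'int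
      rwa [show (∫ ω, (S jj ω - S i ω) * F' (fun m => S m.1 ω) ∂μ) =
        ∫ ω, (f (q+1) ω - f q ω) * F (fun j => f j ω) ∂μ from by rw [hmatch]] at this
    have hmain := DemiAux.main_core μ a b hab M f hfint hdemi
    have hUeq : ∀ ω, U ω = upcrossingsBefore a b f (M+1) ω := by
      intro ω
      rw [hU ω, hM]
    have hupdate : Function.update n s (M+1) = n := by
      rw [show M + 1 = n s from by omega]
      exact Function.update_eq_self s n
    have e1 : (fun ω => max (S n ω - a) 0) = fun ω => max (f M ω - a) 0 := by
      funext ω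
      show max (S n ω - a) 0 = max (S (Function.update n s (M+1)) ω - a) 0
      rw [hupdate]
    have e0 : (fun ω => max (S (Function.update n s 1) ω - a) 0) =
        fun ω => max (f 0 ω - a) 0 := rfl
    simp only [hUeq]
    rw [show (∫ ω, max (S n ω - a) 0 ∂μ) = ∫ ω, max (f M ω - a) 0 ∂μ from by rw [e1],
      show (∫ ω, max (S (Function.update n s 1) ω - a) 0 ∂μ) =
        ∫ ω, max (f 0 ω - a) 0 ∂μ from by rw [e0]]
    exact hmain
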